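/- Let E be a real inner product space and let P, Q, R, S ∈ E. Then ‖P−R‖² + ‖Q−S‖² ≤ ‖P−Q‖² + ‖Q−R‖² + ‖R−S‖² + ‖S−P‖² − (‖S−P‖ − ‖Q−R‖)². -/

import Mathlib

/-- Euclidean quadrilateral inequality: the sum of squared diagonals of the
quadrilateral `PQRS` is bounded by the sum of squared sides minus the squared difference of
the opposite sides `SP` and `QR`. -/
theorem quadrilateral_inequality {E : Type*} [NormedAddCommGroup E]
    [InnerProductSpace ℝ E] (P Q R S : E) :
    ‖P - R‖ ^ 2 + ‖Q - S‖ ^ 2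
      ≤ ‖P - Q‖ ^ 2 + ‖Q - R‖ ^ 2 + ‖R - S‖ ^ 2 + ‖S - P‖ ^ 2
        - (‖S - P‖ - ‖Q - R‖) ^ 2 := by
  have hcs : (inner ℝ (Q - R) (P - S) : ℝ) ≤ ‖Q - R‖ * ‖P - S‖ :=
    real_inner_le_norm _ _
  have hn : ‖S - P‖ = ‖P - S‖ := norm_sub_rev _ _
  have key : ‖P - R‖ ^ 2 + ‖Q - S‖ ^ 2
      = ‖P - Q‖ ^ 2 + ‖R - S‖ ^ 2 + 2 * (inner ℝ (Q - R) (P - S) : ℝ) := by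
    have e : ∀ x : E, ‖x‖ ^ 2 = (inner ℝ x x : ℝ) := fun x =>
      (real_inner_self_eq_norm_sq x).symm
    simp only [e]
    simp only [inner_sub_left, inner_sub_right, real_inner_comm P Q,
      real_inner_comm P R, real_inner_comm P S, real_inner_comm Q R,
      real_inner_comm Q S, real_inner_comm R S]
    ring
  rw [hn]
  nlinarith [hcs, key]
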